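/- arXiv:2207.14738 — 3 statements merged into one kernel-verified Lean document; each statement's English description precedes it below -/
import Mathlib

section
/- Suppose Ω ⊂ P(ℝ^d) is a properly convex domain with Hilbert metric dist_Ω. If p₁, p₂, q₁, q₂ ∈ Ω, then the Hausdorff distance with respect to dist_Ω between the projective line segments [p₁,q₁] and [p₂,q₂] is at most max{dist_Ω(p₁,p₂), dist_Ω(q₁,q₂)}. -/
noncomputable section
open scoped Classical

/-! A properly convex domain `Ω ⊂ P(ℝ^d)` is, in an affine chart containing it as a bounded
set, an open bounded convex subset of an affine space; the Hilbert metric is computed in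
this chart via the cross ratio.  We formalize Statement 2 in the affine chart. -/

variable {E : Type*} [NormedAddCommGroup E] [NormedSpace ℝ E]

/-- The parameters `t` for which the point `p + t(q-p)` on the line through `p` and `q`
lies in `Ω`. -/
def lineParams (Ω : Set E) (p q : E) : Set ℝ := {t : ℝ | p + t • (q - p) ∈ Ω}

/-- The Hilbert distance on a bounded convex open set `Ω`:
`dist_Ω(p,q) = (1/2) log [a,p,q,b]`, where `a = p + α(q-p)`, `b = p + β(q-p)` are the two
boundary points of the line through `p` and `q` (`α = inf`, `β = sup` of `lineParams`),
ordered as `a,p,q,b`, and `[a,p,q,b] = ((1-α)·β)/((-α)·(β-1))` is the cross ratio. -/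
def hilbertDist (Ω : Set E) (p q : E) : ℝ :=
  if p = q then 0
  else
    (1 / 2) * Real.log
      (((1 - sInf (lineParams Ω p q)) * sSup (lineParams Ω p q)) /
        ((-(sInf (lineParams Ω p q))) * (sSup (lineParams Ω p q) - 1)))

/-- The Hausdorff distance between subsets of `Ω` with respect to the Hilbert metric. -/
def hilbertHausdorffDist (Ω : Set E) (A B : Set E) : ℝ :=
  max (sSup ((fun a => sInf (hilbertDist Ω a '' B)) '' A))
    (sSup ((fun b => sInf ((fun a => hilbertDist Ω a b) '' A)) '' B))

/-! ### Auxiliary development: Birkhoff cone approach -/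

namespace HilbertAux

variable (Ω : Set E)

/-- The (closed) cone over `Ω` inside `ℝ × E`. -/
def Kc : Set (ℝ × E) := {v | v = 0 ∨ (0 < v.1 ∧ v.1⁻¹ • v.2 ∈ closure Ω)}

variable {Ω}

lemma zero_mem_Kc : (0 : ℝ × E) ∈ Kc Ω := Or.inl rfl

lemma hat_mem_Kc {x : E} (hx : x ∈ Ω) : ((1 : ℝ), x) ∈ Kc Ω :=
  Or.inr ⟨one_pos, by simpa using subset_closure hx⟩

lemma add_mem_Kc (hconv : Convex ℝ Ω) {u v : ℝ × E} (hu : u ∈ Kc Ω) (hv : v ∈ Kc Ω) :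
    u + v ∈ Kc Ω := by
  rcases hu with rfl | ⟨hu1, hu2⟩
  · simpa using hv
  rcases hv with rfl | ⟨hv1, hv2⟩
  · simpa using (show u ∈ Kc Ω from Or.inr ⟨hu1, hu2⟩)
  have hsum : (0:ℝ) < u.1 + v.1 := by positivity
  refine Or.inr ⟨by simpa using hsum, ?_⟩
  have key := hconv.closure hu2 hv2 (a := u.1 / (u.1 + v.1)) (b := v.1 / (u.1 + v.1))
    (by positivity) (by positivity) (by field_simp)
  have h1 : (u.1 / (u.1 + v.1)) • (u.1⁻¹ • u.2) = ((u.1 + v.1)⁻¹) • u.2 := by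
    rw [smul_smul]; congr 1; field_simp
  have h2 : (v.1 / (u.1 + v.1)) • (v.1⁻¹ • v.2) = ((u.1 + v.1)⁻¹) • v.2 := by
    rw [smul_smul]; congr 1; field_simp
  rw [h1, h2, ← smul_add] at key
  simpa using key

lemma smul_mem_Kc {c : ℝ} (hc : 0 ≤ c) {v : ℝ × E} (hv : v ∈ Kc Ω) : c • v ∈ Kc Ω := by
  rcases eq_or_lt_of_le hc with rfl | hc
  · simpa using zero_mem_Kc
  rcases hv with rfl | ⟨hv1, hv2⟩
  · simpa using zero_mem_Kc
  refine Or.inr ⟨by simpa using mul_pos hc hv1, ?_⟩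
  have h : ((c • v).1)⁻¹ • ((c • v).2) = v.1⁻¹ • v.2 := by
    have hc' : c ≠ 0 := ne_of_gt hc
    have hv1' : v.1 ≠ 0 := ne_of_gt hv1
    simp only [Prod.smul_fst, Prod.smul_snd, smul_eq_mul, smul_smul]
    congr 1
    field_simp
  rw [h]; exact hv2

/-! ### Facts about `lineParams` -/

lemma zero_mem_lp {p q : E} (hp : p ∈ Ω) : (0 : ℝ) ∈ lineParams Ω p q := by
  simp [lineParams, hp]

lemma one_mem_lp {p q : E} (hq : q ∈ Ω) : (1 : ℝ) ∈ lineParams Ω p q := by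
  simp [lineParams, hq]

lemma lp_subset_Icc (hbdd : Bornology.IsBounded Ω) {p q : E} (hne : p ≠ q) :
    ∃ C : ℝ, lineParams Ω p q ⊆ Set.Icc (-C) C := by
  obtain ⟨C, hC⟩ := hbdd.exists_norm_le
  have hqp : (0:ℝ) < ‖q - p‖ := by
    simpa [sub_eq_zero] using (norm_pos_iff.2 (sub_ne_zero.2 (Ne.symm hne)))
  refine ⟨(C + ‖p‖) / ‖q - p‖, fun t ht => ?_⟩
  have h1 : ‖p + t • (q - p)‖ ≤ C := hC _ ht
  have h2 : ‖t • (q - p)‖ ≤ C + ‖p‖ := by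
    have h3 := norm_sub_le (p + t • (q - p)) p
    rw [add_sub_cancel_left] at h3
    linarith
  rw [norm_smul, Real.norm_eq_abs] at h2
  have : |t| ≤ (C + ‖p‖) / ‖q - p‖ := by
    rw [le_div_iff₀ hqp]; exact h2
  exact abs_le.1 this

lemma lp_bddAbove (hbdd : Bornology.IsBounded Ω) {p q : E} (hne : p ≠ q) :
    BddAbove (lineParams Ω p q) := by
  obtain ⟨C, hC⟩ := lp_subset_Icc hbdd hne
  exact ⟨C, fun t ht => (hC ht).2⟩

lemma lp_bddBelow (hbdd : Bornology.IsBounded Ω) {p q : E} (hne : p ≠ q) :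
    BddBelow (lineParams Ω p q) := by
  obtain ⟨C, hC⟩ := lp_subset_Icc hbdd hne
  exact ⟨-C, fun t ht => (hC ht).1⟩

lemma lp_isOpen (hopen : IsOpen Ω) (p q : E) : IsOpen (lineParams Ω p q) := by
  have : lineParams Ω p q = (fun t : ℝ => p + t • (q - p)) ⁻¹' Ω := rfl
  rw [this]
  exact hopen.preimage (by fun_prop)

lemma lp_convex (hconv : Convex ℝ Ω) (p q : E) : Convex ℝ (lineParams Ω p q) := by
  intro t1 ht1 t2 ht2 a b ha hb hab
  have key := hconv ht1 ht2 ha hb hab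
  have : a • (p + t1 • (q - p)) + b • (p + t2 • (q - p)) = p + (a * t1 + b * t2) • (q - p) := by
    rw [show b = 1 - a by linarith]; module
  rw [this] at key
  exact key

lemma sInf_lp_neg (hopen : IsOpen Ω) (hbdd : Bornology.IsBounded Ω) {p q : E}
    (hp : p ∈ Ω) (hne : p ≠ q) : sInf (lineParams Ω p q) < 0 := by
  obtain ⟨ε, hε, hball⟩ := Metric.isOpen_iff.1 (lp_isOpen hopen p q) 0 (zero_mem_lp hp)
  have hmem : -(ε/2) ∈ lineParams Ω p q := by
    apply hball
    rw [Metric.mem_ball, Real.dist_eq, sub_zero, abs_of_nonpos (by linarith : -(ε/2) ≤ 0)]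
    linarith
  calc sInf (lineParams Ω p q) ≤ -(ε/2) := csInf_le (lp_bddBelow hbdd hne) hmem
    _ < 0 := by linarith

lemma one_lt_sSup_lp (hopen : IsOpen Ω) (hbdd : Bornology.IsBounded Ω) {p q : E}
    (hq : q ∈ Ω) (hne : p ≠ q) : 1 < sSup (lineParams Ω p q) := by
  obtain ⟨ε, hε, hball⟩ := Metric.isOpen_iff.1 (lp_isOpen hopen p q) 1 (one_mem_lp hq)
  have hmem : 1 + ε/2 ∈ lineParams Ω p q := by
    apply hball
    rw [Metric.mem_ball, Real.dist_eq, show (1 + ε/2 - 1 : ℝ) = ε/2 by ring,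
      abs_of_pos (by linarith)]
    linarith
  calc (1:ℝ) < 1 + ε/2 := by linarith
    _ ≤ sSup (lineParams Ω p q) := le_csSup (lp_bddAbove hbdd hne) hmem

lemma sSup_mem_closure_lp (hbdd : Bornology.IsBounded Ω) {p q : E} (hp : p ∈ Ω)
    (hne : p ≠ q) : p + (sSup (lineParams Ω p q)) • (q - p) ∈ closure Ω := by
  have h1 : sSup (lineParams Ω p q) ∈ closure (lineParams Ω p q) :=
    csSup_mem_closure ⟨0, zero_mem_lp hp⟩ (lp_bddAbove hbdd hne)
  have hcont : Continuous (fun t : ℝ => p + t • (q - p)) := by fun_prop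
  exact map_mem_closure (f := fun t : ℝ => p + t • (q - p)) hcont h1 (fun t ht => ht)

lemma not_mem_closure_of_sSup_lt (hopen : IsOpen Ω) (hconv : Convex ℝ Ω)
    (hbdd : Bornology.IsBounded Ω) {p q : E} (hp : p ∈ Ω) (hq : q ∈ Ω) (hne : p ≠ q)
    {t : ℝ} (ht : sSup (lineParams Ω p q) < t) : p + t • (q - p) ∉ closure Ω := by
  intro hmem
  set β := sSup (lineParams Ω p q) with hβdef
  have hβ1 : 1 < β := one_lt_sSup_lp hopen hbdd hq hne
  have htpos : (0:ℝ) < t := by linarith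
  set s := (β + t) / 2 with hsdef
  have hs1 : β < s := by rw [hsdef]; linarith
  have hs2 : s < t := by rw [hsdef]; linarith
  have hspos : (0:ℝ) < s := by linarith
  -- the point at parameter s lies on the open segment from p to the closure point
  have hseg : p + s • (q - p) ∈ openSegment ℝ p (p + t • (q - p)) := by
    refine ⟨1 - s / t, s / t, by rw [sub_pos, div_lt_one htpos]; exact hs2,
      by positivity, by ring, ?_⟩
    have hst : (s / t) * t = s := by field_simp
    rw [show (1 - s/t) • p + (s/t) • (p + t • (q - p)) = p + ((s/t)*t) • (q - p) by module,
      hst]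
  have hsub := hconv.openSegment_interior_closure_subset_interior
    (x := p) (y := p + t • (q - p)) (by rw [hopen.interior_eq]; exact hp) hmem
  have : p + s • (q - p) ∈ Ω := by
    have := hsub hseg
    rwa [hopen.interior_eq] at this
  have : s ≤ β := le_csSup (lp_bddAbove hbdd hne) this
  linarith

lemma lp_reflect (p q : E) : lineParams Ω q p = {t : ℝ | 1 - t ∈ lineParams Ω p q} := by
  ext t
  have : q + t • (p - q) = p + (1 - t) • (q - p) := by module
  simp only [lineParams, Set.mem_setOf_eq, this]

lemma sSup_lp_reflect (hbdd : Bornology.IsBounded Ω) {p q : E} (hp : p ∈ Ω) (hq : q ∈ Ω)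
    (hne : p ≠ q) :
    sSup (lineParams Ω q p) = 1 - sInf (lineParams Ω p q) := by
  have hA_ne : (lineParams Ω q p).Nonempty := ⟨0, zero_mem_lp hq⟩
  have hS_ne : (lineParams Ω p q).Nonempty := ⟨0, zero_mem_lp hp⟩
  have hA_bdd := lp_bddAbove hbdd hne.symm
  have hS_bddB := lp_bddBelow hbdd hne
  apply le_antisymm
  · apply csSup_le hA_ne
    intro a ha
    rw [lp_reflect] at ha
    have : sInf (lineParams Ω p q) ≤ 1 - a := csInf_le hS_bddB ha
    linarith
  · have : 1 - sSup (lineParams Ω q p) ≤ sInf (lineParams Ω p q) := by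
      apply le_csInf hS_ne
      intro s hs
      have hmem : 1 - s ∈ lineParams Ω q p := by
        rw [lp_reflect]
        simpa using hs
      have : 1 - s ≤ sSup (lineParams Ω q p) := le_csSup hA_bdd hmem
      linarith
    linarith

lemma sInf_lp_reflect (hbdd : Bornology.IsBounded Ω) {p q : E} (hp : p ∈ Ω) (hq : q ∈ Ω)
    (hne : p ≠ q) :
    sInf (lineParams Ω q p) = 1 - sSup (lineParams Ω p q) := by
  have := sSup_lp_reflect hbdd hq hp hne.symm
  linarith


/-! ### The Birkhoff coefficient and cone membership -/

variable (Ω) in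
/-- The Birkhoff coefficient `M(p/q) = β/(β-1)` where `β = sSup (lineParams Ω p q)`. -/
def birk (p q : E) : ℝ := sSup (lineParams Ω p q) / (sSup (lineParams Ω p q) - 1)

lemma one_lt_birk (hopen : IsOpen Ω) (hbdd : Bornology.IsBounded Ω) {p q : E}
    (hq : q ∈ Ω) (hne : p ≠ q) : 1 < birk Ω p q := by
  have hβ : 1 < sSup (lineParams Ω p q) := one_lt_sSup_lp hopen hbdd hq hne
  rw [birk, lt_div_iff₀ (by linarith)]
  linarith

lemma birk_smul_mem_Kc (hopen : IsOpen Ω) (hbdd : Bornology.IsBounded Ω) {p q : E}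
    (hp : p ∈ Ω) (hq : q ∈ Ω) (hne : p ≠ q) :
    (birk Ω p q) • ((1:ℝ), q) - ((1:ℝ), p) ∈ Kc Ω := by
  set β := sSup (lineParams Ω p q) with hβdef
  have hβ : 1 < β := one_lt_sSup_lp hopen hbdd hq hne
  have hβ1 : β - 1 ≠ 0 := by linarith
  have hfst : ((birk Ω p q) • ((1:ℝ), q) - ((1:ℝ), p)).1 = (β - 1)⁻¹ := by
    simp only [birk, ← hβdef, Prod.smul_fst, Prod.fst_sub, smul_eq_mul, mul_one]
    field_simp; ring
  refine Or.inr ⟨by rw [hfst]; exact inv_pos.2 (by linarith), ?_⟩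
  rw [hfst]
  have hsnd : ((birk Ω p q) • ((1:ℝ), q) - ((1:ℝ), p)).2 = (β/(β-1)) • q - p := by
    simp [birk, ← hβdef]
  rw [hsnd, inv_inv]
  have key : (β - 1) • ((β/(β-1)) • q - p) = p + β • (q - p) := by
    rw [smul_sub, smul_smul, show (β - 1) * (β/(β-1)) = β by field_simp]
    module
  rw [key]
  exact sSup_mem_closure_lp hbdd hp hne

lemma birk_le_of_mem_Kc (hopen : IsOpen Ω) (hconv : Convex ℝ Ω)
    (hbdd : Bornology.IsBounded Ω) {p q : E} (hp : p ∈ Ω) (hq : q ∈ Ω) (hne : p ≠ q)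
    {μ : ℝ} (hμ : μ • ((1:ℝ), q) - ((1:ℝ), p) ∈ Kc Ω) : birk Ω p q ≤ μ := by
  set β := sSup (lineParams Ω p q) with hβdef
  have hβ : 1 < β := one_lt_sSup_lp hopen hbdd hq hne
  rcases hμ with h0 | ⟨h1, h2⟩
  · exfalso
    rw [Prod.ext_iff] at h0
    have hμ1 : μ = 1 := by
      have := h0.1
      simp only [Prod.smul_fst, Prod.fst_sub, smul_eq_mul, mul_one, Prod.fst_zero] at this
      linarith
    have := h0.2
    simp only [Prod.smul_snd, Prod.snd_sub, Prod.snd_zero, hμ1, one_smul, sub_eq_zero] at this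
    exact hne this.symm
  · have hfst : (μ • ((1:ℝ), q) - ((1:ℝ), p)).1 = μ - 1 := by
      simp
    rw [hfst] at h1 h2
    have hμ1 : 1 < μ := by linarith
    have hμ1' : μ - 1 ≠ 0 := by linarith
    have hsnd : (μ • ((1:ℝ), q) - ((1:ℝ), p)).2 = μ • q - p := by simp
    rw [hsnd] at h2
    set t := μ / (μ - 1) with htdef
    have hkey : (μ - 1)⁻¹ • (μ • q - p) = p + t • (q - p) := by
      rw [smul_sub, smul_smul, show (μ-1)⁻¹ * μ = t by rw [htdef]; field_simp]
      rw [smul_sub]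
      have : (μ - 1)⁻¹ • p = ((μ-1)⁻¹) • p := rfl
      rw [show (μ-1)⁻¹ = t - 1 by rw [htdef]; field_simp; ring]
      module
    rw [hkey] at h2
    have htle : t ≤ β := by
      by_contra hlt
      push_neg at hlt
      exact not_mem_closure_of_sSup_lt hopen hconv hbdd hp hq hne hlt h2
    -- from t = μ/(μ-1) ≤ β deduce β/(β-1) ≤ μ
    have h3 : μ ≤ β * (μ - 1) := by
      rw [htdef, div_le_iff₀ (by linarith : (0:ℝ) < μ - 1)] at htle
      linarith
    rw [birk, ← hβdef, div_le_iff₀ (by linarith : (0:ℝ) < β - 1)]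
    nlinarith

lemma mem_Kc_mono (hconv : Convex ℝ Ω) {p q : E} (hq : q ∈ Ω) {μ₀ μ : ℝ}
    (hle : μ₀ ≤ μ) (h : μ₀ • ((1:ℝ), q) - ((1:ℝ), p) ∈ Kc Ω) :
    μ • ((1:ℝ), q) - ((1:ℝ), p) ∈ Kc Ω := by
  have heq : μ • ((1:ℝ), q) - ((1:ℝ), p)
      = (μ₀ • ((1:ℝ), q) - ((1:ℝ), p)) + (μ - μ₀) • ((1:ℝ), q) := by
    module
  rw [heq]
  exact add_mem_Kc hconv h (smul_mem_Kc (by linarith) (hat_mem_Kc hq))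

/-! ### Basic properties of `hilbertDist` -/

lemma hilbertDist_eq_log_birk (hbdd : Bornology.IsBounded Ω) {p q : E}
    (hp : p ∈ Ω) (hq : q ∈ Ω) (hne : p ≠ q)
    (hα : sInf (lineParams Ω p q) < 0) (hβ : 1 < sSup (lineParams Ω p q)) :
    hilbertDist Ω p q = (1/2) * Real.log (birk Ω p q * birk Ω q p) := by
  rw [hilbertDist, if_neg hne]
  congr 1
  rw [birk, birk, sSup_lp_reflect hbdd hp hq hne]
  set α := sInf (lineParams Ω p q)
  set β := sSup (lineParams Ω p q)
  have h1 : -α ≠ 0 := by linarith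
  have h2 : β - 1 ≠ 0 := by linarith
  have h3 : (1 - α) - 1 ≠ 0 := by simpa using h1
  have h4 : α ≠ 0 := by linarith
  congr 1
  field_simp
  ring

lemma hilbertDist_nonneg (hopen : IsOpen Ω) (hbdd : Bornology.IsBounded Ω) {p q : E}
    (hp : p ∈ Ω) (hq : q ∈ Ω) : 0 ≤ hilbertDist Ω p q := by
  rw [hilbertDist]
  split_ifs with h
  · exact le_rfl
  · have hα : sInf (lineParams Ω p q) < 0 := sInf_lp_neg hopen hbdd hp h
    have hβ : 1 < sSup (lineParams Ω p q) := one_lt_sSup_lp hopen hbdd hq h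
    have hlog : 0 ≤ Real.log
        (((1 - sInf (lineParams Ω p q)) * sSup (lineParams Ω p q)) /
          ((-(sInf (lineParams Ω p q))) * (sSup (lineParams Ω p q) - 1))) := by
      apply Real.log_nonneg
      rw [le_div_iff₀ (by nlinarith)]
      nlinarith
    linarith

lemma hilbertDist_symm (hbdd : Bornology.IsBounded Ω) {p q : E}
    (hp : p ∈ Ω) (hq : q ∈ Ω) : hilbertDist Ω p q = hilbertDist Ω q p := by
  by_cases hne : p = q
  · subst hne; rfl
  rw [hilbertDist, hilbertDist, if_neg hne, if_neg (Ne.symm hne)]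
  rw [sSup_lp_reflect hbdd hp hq hne, sInf_lp_reflect hbdd hp hq hne]
  congr 1
  ring_nf


/-! ### The sandwich lemmas -/

lemma dist_le_of_sandwich (hopen : IsOpen Ω) (hconv : Convex ℝ Ω)
    (hbdd : Bornology.IsBounded Ω) {z w : E} (hz : z ∈ Ω) (hw : w ∈ Ω) {R lam : ℝ}
    (hR : 1 ≤ R) (hlam : 0 < lam)
    (h1 : (R * lam) • ((1:ℝ), w) - ((1:ℝ), z) ∈ Kc Ω)
    (h2 : R • ((1:ℝ), z) - lam • ((1:ℝ), w) ∈ Kc Ω) :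
    hilbertDist Ω z w ≤ Real.log R := by
  by_cases hne : z = w
  · rw [hilbertDist, if_pos hne]
    exact Real.log_nonneg hR
  · have hb1 : birk Ω z w ≤ R * lam := birk_le_of_mem_Kc hopen hconv hbdd hz hw hne h1
    have heq : lam⁻¹ • (R • ((1:ℝ), z) - lam • ((1:ℝ), w))
        = (R / lam) • ((1:ℝ), z) - ((1:ℝ), w) := by
      rw [smul_sub, smul_smul, smul_smul, show lam⁻¹ * R = R / lam by rw [div_eq_inv_mul],
        inv_mul_cancel₀ hlam.ne', one_smul]
    have h2'' := smul_mem_Kc (inv_nonneg.2 hlam.le) h2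
    rw [heq] at h2''
    have hb2 : birk Ω w z ≤ R / lam :=
      birk_le_of_mem_Kc hopen hconv hbdd hw hz (Ne.symm hne) h2''
    have hbz : 1 < birk Ω z w := one_lt_birk hopen hbdd hw hne
    have hbw : 1 < birk Ω w z := one_lt_birk hopen hbdd hz (Ne.symm hne)
    rw [hilbertDist_eq_log_birk hbdd hz hw hne (sInf_lp_neg hopen hbdd hz hne)
      (one_lt_sSup_lp hopen hbdd hw hne)]
    have hprod : birk Ω z w * birk Ω w z ≤ R ^ 2 := by
      calc birk Ω z w * birk Ω w z ≤ (R * lam) * (R / lam) :=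
            mul_le_mul hb1 hb2 (by linarith) (by nlinarith)
        _ = R ^ 2 := by field_simp
    have hpos : 0 < birk Ω z w * birk Ω w z := by nlinarith
    have hlog := Real.log_le_log hpos hprod
    rw [show Real.log (R ^ 2) = 2 * Real.log R by rw [Real.log_pow]; push_cast; ring] at hlog
    linarith

lemma exists_sandwich (hopen : IsOpen Ω) (hconv : Convex ℝ Ω)
    (hbdd : Bornology.IsBounded Ω) {x x' : E} (hx : x ∈ Ω) (hx' : x' ∈ Ω) {R : ℝ}
    (hR : Real.exp (hilbertDist Ω x x') ≤ R) :
    ∃ lam : ℝ, 0 < lam ∧ ((R * lam) • ((1:ℝ), x') - ((1:ℝ), x) ∈ Kc Ω) ∧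
      (R • ((1:ℝ), x) - lam • ((1:ℝ), x') ∈ Kc Ω) := by
  have hR1 : 1 ≤ R := by
    calc (1:ℝ) = Real.exp 0 := Real.exp_zero.symm
      _ ≤ Real.exp (hilbertDist Ω x x') :=
          Real.exp_le_exp.2 (hilbertDist_nonneg hopen hbdd hx hx')
      _ ≤ R := hR
  by_cases hne : x = x'
  · subst hne
    refine ⟨1, one_pos, ?_, ?_⟩
    · have heq : (R * 1) • ((1:ℝ), x) - ((1:ℝ), x) = (R - 1) • ((1:ℝ), x) := by module
      rw [heq]; exact smul_mem_Kc (by linarith) (hat_mem_Kc hx)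
    · have heq : R • ((1:ℝ), x) - (1:ℝ) • ((1:ℝ), x) = (R - 1) • ((1:ℝ), x) := by module
      rw [heq]; exact smul_mem_Kc (by linarith) (hat_mem_Kc hx)
  · set m := birk Ω x x' with hmdef
    set m' := birk Ω x' x with hm'def
    have hm : 1 < m := one_lt_birk hopen hbdd hx' hne
    have hm' : 1 < m' := one_lt_birk hopen hbdd hx (Ne.symm hne)
    have hmm' : (0:ℝ) < m * m' := by nlinarith
    have hdivpos : (0:ℝ) < m / m' := by positivity
    have hexp : Real.exp (hilbertDist Ω x x') = Real.sqrt (m * m') := by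
      rw [hilbertDist_eq_log_birk hbdd hx hx' hne (sInf_lp_neg hopen hbdd hx hne)
        (one_lt_sSup_lp hopen hbdd hx' hne), ← hmdef, ← hm'def,
        show (1/2 : ℝ) * Real.log (m * m') = Real.log (Real.sqrt (m * m')) by
          rw [Real.log_sqrt hmm'.le]; ring,
        Real.exp_log (Real.sqrt_pos.2 hmm')]
    set lam := Real.sqrt (m / m') with hlamdef
    have hlampos : 0 < lam := Real.sqrt_pos.2 hdivpos
    have hRs : Real.sqrt (m * m') ≤ R := hexp ▸ hR
    refine ⟨lam, hlampos, ?_, ?_⟩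
    · have h1 : Real.sqrt (m * m') * lam = m := by
        rw [hlamdef, ← Real.sqrt_mul hmm'.le, show m * m' * (m / m') = m ^ 2 by
          field_simp, Real.sqrt_sq (by linarith)]
      have hkey : m ≤ R * lam := by
        calc m = Real.sqrt (m * m') * lam := h1.symm
          _ ≤ R * lam := mul_le_mul_of_nonneg_right hRs hlampos.le
      exact mem_Kc_mono hconv hx' hkey (birk_smul_mem_Kc hopen hbdd hx hx' hne)
    · have h1 : lam * m' = Real.sqrt (m * m') := by
        have e1 : lam * m' = Real.sqrt ((m / m') * m' ^ 2) := by
          rw [Real.sqrt_mul hdivpos.le, Real.sqrt_sq (by linarith : (0:ℝ) ≤ m'), hlamdef]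
        rw [e1, show (m / m') * m' ^ 2 = m * m' by field_simp]
      have hkey : m' ≤ R / lam := by
        rw [le_div_iff₀ hlampos]
        calc m' * lam = lam * m' := by ring
          _ = Real.sqrt (m * m') := h1
          _ ≤ R := hRs
      have hmem := mem_Kc_mono hconv hx hkey (birk_smul_mem_Kc hopen hbdd hx' hx (Ne.symm hne))
      have heq : lam • ((R / lam) • ((1:ℝ), x) - ((1:ℝ), x'))
          = R • ((1:ℝ), x) - lam • ((1:ℝ), x') := by
        rw [smul_sub, smul_smul, show lam * (R / lam) = R by field_simp]
      rw [← heq]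
      exact smul_mem_Kc hlampos.le hmem


/-- Key geometric lemma: every point of `[x,y]` is within
`max (dist x x') (dist y y')` of some point of `[x',y']`. -/
lemma exists_near (hopen : IsOpen Ω) (hconv : Convex ℝ Ω)
    (hbdd : Bornology.IsBounded Ω) {x y x' y' : E}
    (hx : x ∈ Ω) (hy : y ∈ Ω) (hx' : x' ∈ Ω) (hy' : y' ∈ Ω) {z : E}
    (hz : z ∈ segment ℝ x y) :
    ∃ w ∈ segment ℝ x' y',
      hilbertDist Ω z w ≤ max (hilbertDist Ω x x') (hilbertDist Ω y y') := by
  set M := max (hilbertDist Ω x x') (hilbertDist Ω y y') with hMdef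
  have hM0 : 0 ≤ M :=
    le_trans (hilbertDist_nonneg hopen hbdd hx hx') (le_max_left _ _)
  set R := Real.exp M with hRdef
  have hR1 : 1 ≤ R := by
    calc (1:ℝ) = Real.exp 0 := Real.exp_zero.symm
      _ ≤ R := Real.exp_le_exp.2 hM0
  obtain ⟨lam, hlam, hl1, hl2⟩ := exists_sandwich hopen hconv hbdd hx hx'
    (Real.exp_le_exp.2 (le_max_left _ _))
  obtain ⟨mu, hmu, hm1, hm2⟩ := exists_sandwich hopen hconv hbdd hy hy'
    (Real.exp_le_exp.2 (le_max_right _ _))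
  obtain ⟨a, b, ha, hb, hab, hzeq⟩ := hz
  set c := a * lam + b * mu with hc
  have hcpos : 0 < c := by
    rcases (show 0 < a ∨ 0 < b by by_contra h; push_neg at h; nlinarith [h.1, h.2])
      with hA | hB
    · nlinarith
    · nlinarith
  have hcne : a * lam + b * mu ≠ 0 := by rw [← hc]; exact hcpos.ne'
  set w := (c⁻¹ * (a * lam)) • x' + (c⁻¹ * (b * mu)) • y' with hw
  have hwseg : w ∈ segment ℝ x' y' := by
    refine ⟨c⁻¹ * (a * lam), c⁻¹ * (b * mu),
      mul_nonneg (inv_nonneg.2 hcpos.le) (mul_nonneg ha hlam.le),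
      mul_nonneg (inv_nonneg.2 hcpos.le) (mul_nonneg hb hmu.le), ?_, rfl⟩
    rw [← mul_add, ← hc, inv_mul_cancel₀ hcpos.ne']
  have hzΩ : z ∈ Ω := hconv.segment_subset hx hy ⟨a, b, ha, hb, hab, hzeq⟩
  have hwΩ : w ∈ Ω := hconv.segment_subset hx' hy' hwseg
  refine ⟨w, hwseg, ?_⟩
  have key1 : (R * c) • ((1:ℝ), w) - ((1:ℝ), z)
      = a • ((R * lam) • ((1:ℝ), x') - ((1:ℝ), x))
        + b • ((R * mu) • ((1:ℝ), y') - ((1:ℝ), y)) := by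
    rw [← hzeq, hw]
    apply Prod.ext
    · simp only [Prod.smul_fst, Prod.fst_sub, Prod.fst_add, smul_eq_mul, mul_one]
      linear_combination R * hc + hab
    · simp only [Prod.smul_snd, Prod.snd_sub, Prod.snd_add]
      match_scalars <;> (field_simp [hcne]; try ring)
  have key2 : R • ((1:ℝ), z) - c • ((1:ℝ), w)
      = a • (R • ((1:ℝ), x) - lam • ((1:ℝ), x'))
        + b • (R • ((1:ℝ), y) - mu • ((1:ℝ), y')) := by
    rw [← hzeq, hw]
    apply Prod.ext
    · simp only [Prod.smul_fst, Prod.fst_sub, Prod.fst_add, smul_eq_mul, mul_one]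
      linear_combination (-R) * hab - hc
    · simp only [Prod.smul_snd, Prod.snd_sub, Prod.snd_add]
      match_scalars <;> (field_simp [hcne]; try ring)
  have hK1 : (R * c) • ((1:ℝ), w) - ((1:ℝ), z) ∈ Kc Ω := by
    rw [key1]
    exact add_mem_Kc hconv (smul_mem_Kc ha hl1) (smul_mem_Kc hb hm1)
  have hK2 : R • ((1:ℝ), z) - c • ((1:ℝ), w) ∈ Kc Ω := by
    rw [key2]
    exact add_mem_Kc hconv (smul_mem_Kc ha hl2) (smul_mem_Kc hb hm2)
  have := dist_le_of_sandwich hopen hconv hbdd hzΩ hwΩ hR1 hcpos hK1 hK2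
  rwa [hRdef, Real.log_exp] at this

end HilbertAux

/-- cf. [IZ2021, Prop. 5.3]: in a properly convex domain `Ω` with its Hilbert
metric, for `p₁, p₂, q₁, q₂ ∈ Ω` the Hausdorff distance between the segments `[p₁,q₁]` and
`[p₂,q₂]` is at most `max{dist_Ω(p₁,p₂), dist_Ω(q₁,q₂)}`. -/
theorem stmt2 (Ω : Set E) (hopen : IsOpen Ω) (hconv : Convex ℝ Ω)
    (hbdd : Bornology.IsBounded Ω) (p₁ p₂ q₁ q₂ : E)
    (hp₁ : p₁ ∈ Ω) (hp₂ : p₂ ∈ Ω) (hq₁ : q₁ ∈ Ω) (hq₂ : q₂ ∈ Ω) :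
    hilbertHausdorffDist Ω (segment ℝ p₁ q₁) (segment ℝ p₂ q₂) ≤
      max (hilbertDist Ω p₁ p₂) (hilbertDist Ω q₁ q₂) := by
  classical
  set M := max (hilbertDist Ω p₁ p₂) (hilbertDist Ω q₁ q₂) with hMdef
  have hM0 : 0 ≤ M :=
    le_trans (HilbertAux.hilbertDist_nonneg hopen hbdd hp₁ hp₂) (le_max_left _ _)
  have hsub1 : segment ℝ p₁ q₁ ⊆ Ω := hconv.segment_subset hp₁ hq₁
  have hsub2 : segment ℝ p₂ q₂ ⊆ Ω := hconv.segment_subset hp₂ hq₂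
  rw [hilbertHausdorffDist]
  apply max_le
  · apply Real.sSup_le _ hM0
    rintro v ⟨z, hzseg, rfl⟩
    obtain ⟨w, hwseg, hw⟩ := HilbertAux.exists_near hopen hconv hbdd hp₁ hq₁ hp₂ hq₂ hzseg
    refine csInf_le_of_le ?_ ⟨w, hwseg, rfl⟩ hw
    refine ⟨0, ?_⟩
    rintro r ⟨u, huseg, rfl⟩
    exact HilbertAux.hilbertDist_nonneg hopen hbdd (hsub1 hzseg) (hsub2 huseg)
  · apply Real.sSup_le _ hM0
    rintro v ⟨z, hzseg, rfl⟩
    obtain ⟨w, hwseg, hw⟩ := HilbertAux.exists_near hopen hconv hbdd hp₂ hq₂ hp₁ hq₁ hzseg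
    have hw' : hilbertDist Ω w z ≤ M := by
      rw [HilbertAux.hilbertDist_symm hbdd (hsub1 hwseg) (hsub2 hzseg)]
      refine le_trans hw ?_
      rw [hMdef]
      apply max_le
      · exact le_trans (le_of_eq (HilbertAux.hilbertDist_symm hbdd hp₂ hp₁))
          (le_max_left _ _)
      · exact le_trans (le_of_eq (HilbertAux.hilbertDist_symm hbdd hq₂ hq₁))
          (le_max_right _ _)
    refine csInf_le_of_le ?_ ⟨w, hwseg, rfl⟩ hw'
    refine ⟨0, ?_⟩
    rintro r ⟨u, huseg, rfl⟩
    exact HilbertAux.hilbertDist_nonneg hopen hbdd (hsub1 huseg) (hsub2 hzseg)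
end
end

section
/- Let X ⊂ P(ℝ^d) be a connected subset contained in some affine chart. If 𝔸₁ and 𝔸₂ are two affine charts of P(ℝ^d) each containing X, then the convex hull of X computed in 𝔸₁ equals the convex hull of X computed in 𝔸₂. -/
noncomputable section

open Projectivization
open scoped LinearAlgebra.Projectivization

/-- The quotient topology on the projectivization of a topological vector space. -/
instance projTopology {E : Type*} [AddCommGroup E] [Module ℝ E] [TopologicalSpace E] :
    TopologicalSpace (ℙ ℝ E) :=
  TopologicalSpace.coinduced
    (fun v : {v : E // v ≠ 0} => Projectivization.mk ℝ v.1 v.2) inferInstance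

variable {d : ℕ}

/-- The representative of `p` in the affine chart determined by a linear functional `f`
(the chart is the complement of the projective hyperplane `P(ker f)`, identified with the
affine hyperplane `{f = 1}`); this is independent of the choice of lift of `p`. -/
def chartRep (f : (Fin d → ℝ) →ₗ[ℝ] ℝ) (p : ℙ ℝ (Fin d → ℝ)) : Fin d → ℝ :=
  (f p.rep)⁻¹ • p.rep

/-- The convex hull of `X ⊂ P(ℝ^d)` computed in the affine chart determined by `f`,
regarded again as a subset of `P(ℝ^d)`. -/
def chartHull (f : (Fin d → ℝ) →ₗ[ℝ] ℝ) (X : Set (ℙ ℝ (Fin d → ℝ))) :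
    Set (ℙ ℝ (Fin d → ℝ)) :=
  {p | ∃ v, ∃ hv : v ≠ 0, v ∈ convexHull ℝ (chartRep f '' X) ∧ p = Projectivization.mk ℝ v hv}

/-- The "slope" function `p ↦ f₂(p)/f₁(p)` on projective space. -/
def slopeFn (f₁ f₂ : (Fin d → ℝ) →ₗ[ℝ] ℝ) (p : ℙ ℝ (Fin d → ℝ)) : ℝ :=
  (f₁ p.rep)⁻¹ * f₂ p.rep

lemma slopeFn_mk (f₁ f₂ : (Fin d → ℝ) →ₗ[ℝ] ℝ) (v : Fin d → ℝ) (hv : v ≠ 0)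
    (h1 : f₁ v ≠ 0) : slopeFn f₁ f₂ (Projectivization.mk ℝ v hv) = (f₁ v)⁻¹ * f₂ v := by
  obtain ⟨a, ha⟩ := Projectivization.exists_smul_eq_mk_rep ℝ v hv
  have ha' : (a : ℝ) ≠ 0 := a.ne_zero
  unfold slopeFn
  rw [← ha, Units.smul_def, map_smul, map_smul]
  simp only [smul_eq_mul]
  field_simp

lemma f_rep_mk_ne_zero (f : (Fin d → ℝ) →ₗ[ℝ] ℝ) (v : Fin d → ℝ) (hv : v ≠ 0)
    (h1 : f v ≠ 0) : f (Projectivization.mk ℝ v hv).rep ≠ 0 := by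
  obtain ⟨a, ha⟩ := Projectivization.exists_smul_eq_mk_rep ℝ v hv
  rw [← ha, Units.smul_def, map_smul, smul_eq_mul]
  exact mul_ne_zero a.ne_zero h1

lemma f_mk_ne_zero (f : (Fin d → ℝ) →ₗ[ℝ] ℝ) (v : Fin d → ℝ) (hv : v ≠ 0)
    (h1 : f (Projectivization.mk ℝ v hv).rep ≠ 0) : f v ≠ 0 := by
  intro hc
  obtain ⟨a, ha⟩ := Projectivization.exists_smul_eq_mk_rep ℝ v hv
  apply h1
  rw [← ha, Units.smul_def, map_smul, smul_eq_mul, hc, mul_zero]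

/-- The chart domain is open. -/
lemma isOpen_chartDomain (f : (Fin d → ℝ) →ₗ[ℝ] ℝ) :
    IsOpen {p : ℙ ℝ (Fin d → ℝ) | f p.rep ≠ 0} := by
  rw [projTopology, isOpen_coinduced]
  have heq : (fun v : {v : Fin d → ℝ // v ≠ 0} => Projectivization.mk ℝ v.1 v.2) ⁻¹'
      {p : ℙ ℝ (Fin d → ℝ) | f p.rep ≠ 0} =
      (Subtype.val : {v : Fin d → ℝ // v ≠ 0} → _) ⁻¹' {v : Fin d → ℝ | f v ≠ 0} := by
    ext ⟨v, hv⟩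
    simp only [Set.mem_preimage, Set.mem_setOf_eq]
    exact ⟨fun h => f_mk_ne_zero f v hv h, fun h => f_rep_mk_ne_zero f v hv h⟩
  rw [heq]
  apply IsOpen.preimage continuous_subtype_val
  have hfc : Continuous f := f.continuous_of_finiteDimensional
  exact isOpen_compl_iff.mpr (isClosed_singleton.preimage hfc)

/-- `slopeFn` is continuous on the chart domain of `f₁`. -/
lemma continuousOn_slopeFn (f₁ f₂ : (Fin d → ℝ) →ₗ[ℝ] ℝ) :
    ContinuousOn (slopeFn f₁ f₂) {p : ℙ ℝ (Fin d → ℝ) | f₁ p.rep ≠ 0} := by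
  rw [continuousOn_open_iff (isOpen_chartDomain f₁)]
  intro V hV
  rw [projTopology, isOpen_coinduced]
  have hfc : Continuous (f₁ : (Fin d → ℝ) → ℝ) := f₁.continuous_of_finiteDimensional
  have hfc2 : Continuous (f₂ : (Fin d → ℝ) → ℝ) := f₂.continuous_of_finiteDimensional
  have hWopen : IsOpen {v : Fin d → ℝ | f₁ v ≠ 0} :=
    isOpen_compl_iff.mpr (isClosed_singleton.preimage hfc)
  have hcont : ContinuousOn (fun v : Fin d → ℝ => (f₁ v)⁻¹ * f₂ v) {v | f₁ v ≠ 0} :=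
    ContinuousOn.mul (hfc.continuousOn.inv₀ (fun x hx => hx)) hfc2.continuousOn
  have hopen2 : IsOpen ({v : Fin d → ℝ | f₁ v ≠ 0} ∩
      (fun v : Fin d → ℝ => (f₁ v)⁻¹ * f₂ v) ⁻¹' V) :=
    hcont.isOpen_inter_preimage hWopen hV
  have heq : (fun v : {v : Fin d → ℝ // v ≠ 0} => Projectivization.mk ℝ v.1 v.2) ⁻¹'
      ({p : ℙ ℝ (Fin d → ℝ) | f₁ p.rep ≠ 0} ∩ slopeFn f₁ f₂ ⁻¹' V) =
      (Subtype.val : {v : Fin d → ℝ // v ≠ 0} → _) ⁻¹'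
        ({v : Fin d → ℝ | f₁ v ≠ 0} ∩ (fun v : Fin d → ℝ => (f₁ v)⁻¹ * f₂ v) ⁻¹' V) := by
    ext ⟨v, hv⟩
    simp only [Set.mem_preimage, Set.mem_inter_iff, Set.mem_setOf_eq]
    constructor
    · rintro ⟨h1, h2⟩
      have h1' : f₁ v ≠ 0 := f_mk_ne_zero f₁ v hv h1
      refine ⟨h1', ?_⟩
      rwa [slopeFn_mk f₁ f₂ v hv h1'] at h2
    · rintro ⟨h1, h2⟩
      refine ⟨f_rep_mk_ne_zero f₁ v hv h1, ?_⟩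
      rwa [slopeFn_mk f₁ f₂ v hv h1]
  rw [heq]
  exact hopen2.preimage continuous_subtype_val

/-- One inclusion, under a uniform sign hypothesis. -/
lemma chartHull_subset (f₁ f₂ : (Fin d → ℝ) →ₗ[ℝ] ℝ) (X : Set (ℙ ℝ (Fin d → ℝ)))
    (ε : ℝ) (hε : ε = 1 ∨ ε = -1)
    (hsign : ∀ p ∈ X, 0 < ε * ((f₁ p.rep)⁻¹ * f₂ p.rep)) :
    chartHull f₁ X ⊆ chartHull f₂ X := by
  have hεne : ε ≠ 0 := by rcases hε with h | h <;> rw [h] <;> norm_num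
  set S : Set (Fin d → ℝ) :=
    {v | 0 < ε * f₂ v ∧ (f₂ v)⁻¹ • v ∈ convexHull ℝ (chartRep f₂ '' X)} with hS
  have hSconv : Convex ℝ S := by
    rintro v ⟨hv1, hv2⟩ w ⟨hw1, hw2⟩ t s ht hs hts
    have hfv : f₂ v ≠ 0 := fun hc => by rw [hc, mul_zero] at hv1; exact lt_irrefl 0 hv1
    have hfw : f₂ w ≠ 0 := fun hc => by rw [hc, mul_zero] at hw1; exact lt_irrefl 0 hw1
    have hfueq : f₂ (t • v + s • w) = t * f₂ v + s * f₂ w := by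
      rw [map_add, map_smul, map_smul, smul_eq_mul, smul_eq_mul]
    have hu1 : 0 < ε * f₂ (t • v + s • w) := by
      rw [hfueq, mul_add]
      rcases ht.lt_or_eq with ht' | ht'
      · rcases hs.lt_or_eq with hs' | hs'
        · have h1 : 0 < ε * (t * f₂ v) := by
            rw [mul_comm t, ← mul_assoc]; exact mul_pos hv1 ht'
          have h2 : 0 < ε * (s * f₂ w) := by
            rw [mul_comm s, ← mul_assoc]; exact mul_pos hw1 hs'
          linarith
        · have hts' : t = 1 := by linarith
          rw [← hs', hts']; simpa using hv1
      · have hts' : s = 1 := by linarith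
        rw [← ht', hts']; simpa using hw1
    have hfu : f₂ (t • v + s • w) ≠ 0 := fun hc => by
      rw [hc, mul_zero] at hu1; exact lt_irrefl 0 hu1
    refine ⟨hu1, ?_⟩
    set a : ℝ := t * f₂ v / f₂ (t • v + s • w) with ha
    set b : ℝ := s * f₂ w / f₂ (t • v + s • w) with hb
    have ha0 : 0 ≤ a := by
      rw [ha]
      have : t * f₂ v / f₂ (t • v + s • w) =
          t * (ε * f₂ v) / (ε * f₂ (t • v + s • w)) := by
        rw [show t * (ε * f₂ v) = ε * (t * f₂ v) from by ring,
          mul_div_mul_left _ _ hεne]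
      rw [this]
      exact div_nonneg (mul_nonneg ht hv1.le) hu1.le
    have hb0 : 0 ≤ b := by
      rw [hb]
      have : s * f₂ w / f₂ (t • v + s • w) =
          s * (ε * f₂ w) / (ε * f₂ (t • v + s • w)) := by
        rw [show s * (ε * f₂ w) = ε * (s * f₂ w) from by ring,
          mul_div_mul_left _ _ hεne]
      rw [this]
      exact div_nonneg (mul_nonneg hs hw1.le) hu1.le
    have hab : a + b = 1 := by
      rw [ha, hb, ← add_div, ← hfueq, div_self hfu]
    have key := (convex_convexHull ℝ (chartRep f₂ '' X)) hv2 hw2 ha0 hb0 hab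
    have hfu' : t * f₂ v + s * f₂ w ≠ 0 := by rw [← hfueq]; exact hfu
    have heq : (f₂ (t • v + s • w))⁻¹ • (t • v + s • w) =
        a • ((f₂ v)⁻¹ • v) + b • ((f₂ w)⁻¹ • w) := by
      rw [smul_add, smul_smul, smul_smul, smul_smul, smul_smul]
      congr 1
      · congr 1
        rw [ha, hfueq]; field_simp
      · congr 1
        rw [hb, hfueq]; field_simp
    rw [heq]
    exact key
  have himg : chartRep f₁ '' X ⊆ S := by
    rintro _ ⟨p, hp, rfl⟩
    have hsp := hsign p hp
    have hf1 : f₁ p.rep ≠ 0 := by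
      intro hc; rw [hc, inv_zero, zero_mul, mul_zero] at hsp; exact lt_irrefl 0 hsp
    have hf2 : f₂ p.rep ≠ 0 := by
      intro hc; rw [hc, mul_zero, mul_zero] at hsp; exact lt_irrefl 0 hsp
    have hval : f₂ (chartRep f₁ p) = (f₁ p.rep)⁻¹ * f₂ p.rep := by
      unfold chartRep; rw [map_smul, smul_eq_mul]
    constructor
    · rw [hval]; exact hsp
    · have : (f₂ (chartRep f₁ p))⁻¹ • chartRep f₁ p = chartRep f₂ p := by
        unfold chartRep
        rw [map_smul, smul_eq_mul, smul_smul]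
        congr 1
        field_simp
      rw [this]
      exact subset_convexHull ℝ _ ⟨p, hp, rfl⟩
  have hhull : convexHull ℝ (chartRep f₁ '' X) ⊆ S := convexHull_min himg hSconv
  rintro p ⟨v, hv, hmem, rfl⟩
  obtain ⟨hv1, hv2⟩ := hhull hmem
  have hfv : f₂ v ≠ 0 := fun hc => by rw [hc, mul_zero] at hv1; exact lt_irrefl 0 hv1
  have hw : (f₂ v)⁻¹ • v ≠ 0 := smul_ne_zero (inv_ne_zero hfv) hv
  refine ⟨(f₂ v)⁻¹ • v, hw, hv2, ?_⟩
  rw [Projectivization.mk_eq_mk_iff']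
  exact ⟨f₂ v, by rw [smul_smul, mul_inv_cancel₀ hfv, one_smul]⟩

/-- [IZ2019, Lem. 5.9]: if `X ⊂ P(ℝ^d)` is connected and is contained in the
affine charts determined by `f₁` and by `f₂`, then the convex hulls of `X` computed in the
two charts agree. -/
theorem stmt3 (d : ℕ) (X : Set (ℙ ℝ (Fin d → ℝ))) (hX : IsConnected X)
    (f₁ f₂ : (Fin d → ℝ) →ₗ[ℝ] ℝ) (hf₁ : f₁ ≠ 0) (hf₂ : f₂ ≠ 0)
    (hX₁ : ∀ p ∈ X, f₁ p.rep ≠ 0) (hX₂ : ∀ p ∈ X, f₂ p.rep ≠ 0) :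
    chartHull f₁ X = chartHull f₂ X := by
  set g := slopeFn f₁ f₂ with hg
  have gne : ∀ p ∈ X, g p ≠ 0 := fun p hp =>
    mul_ne_zero (inv_ne_zero (hX₁ p hp)) (hX₂ p hp)
  have gcont : ContinuousOn g X :=
    (continuousOn_slopeFn f₁ f₂).mono (fun p hp => hX₁ p hp)
  obtain ⟨p₀, hp₀⟩ := hX.nonempty
  have hsame : ∀ p ∈ X, 0 < g p * g p₀ := by
    intro p hp
    rcases lt_or_gt_of_ne (gne p hp) with h | h <;>
      rcases lt_or_gt_of_ne (gne p₀ hp₀) with h0 | h0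
    · exact mul_pos_of_neg_of_neg h h0
    · exfalso
      have h00 : (0 : ℝ) ∈ Set.Icc (g p) (g p₀) := ⟨h.le, h0.le⟩
      obtain ⟨q, hq, hgq⟩ := hX.isPreconnected.intermediate_value hp hp₀ gcont h00
      exact gne q hq hgq
    · exfalso
      have h00 : (0 : ℝ) ∈ Set.Icc (g p₀) (g p) := ⟨h0.le, h.le⟩
      obtain ⟨q, hq, hgq⟩ := hX.isPreconnected.intermediate_value hp₀ hp gcont h00
      exact gne q hq hgq
    · exact mul_pos h h0
  set ε : ℝ := if 0 < g p₀ then 1 else -1 with hε'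
  have hε : ε = 1 ∨ ε = -1 := by
    rw [hε']; split <;> simp
  have hsign1 : ∀ p ∈ X, 0 < ε * ((f₁ p.rep)⁻¹ * f₂ p.rep) := by
    intro p hp
    have hs := hsame p hp
    rcases mul_pos_iff.mp hs with ⟨h1, h2⟩ | ⟨h1, h2⟩
    · have : ε = 1 := by rw [hε', if_pos h2]
      rw [this, one_mul]; exact h1
    · have : ε = -1 := by rw [hε', if_neg (not_lt.mpr h2.le)]
      rw [this, neg_one_mul, neg_pos]; exact h1
  have hsign2 : ∀ p ∈ X, 0 < ε * ((f₂ p.rep)⁻¹ * f₁ p.rep) := by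
    intro p hp
    have h := hsign1 p hp
    have heq : (f₂ p.rep)⁻¹ * f₁ p.rep = ((f₁ p.rep)⁻¹ * f₂ p.rep)⁻¹ := by
      rw [mul_inv, inv_inv, mul_comm]
    rw [heq]
    rcases hε with he | he
    · rw [he, one_mul] at h ⊢
      exact inv_pos.mpr h
    · rw [he, neg_one_mul, neg_pos] at h ⊢
      exact inv_neg''.mpr h
  exact Set.Subset.antisymm
    (chartHull_subset f₁ f₂ X ε hε hsign1)
    (chartHull_subset f₂ f₁ X ε hε hsign2)
end
end

section
/- Let d be even and let τ: SL(2,ℝ) → SL(d,ℝ) be the standard irreducible representation on homogeneous polynomials of degree d−1 in variables x₁, x₂ (acting by τ(g)f = f ∘ g^{-1}). Then there is no properly convex domain Ω ⊂ P(ℝ^d) invariant under the image of τ. -/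
noncomputable section

open Projectivization Matrix MvPolynomial
open scoped LinearAlgebra.Projectivization MatrixGroups

variable {d : ℕ}

/-- `Ω ⊂ P(ℝ^d)` is a properly convex domain: open, and bounded and convex in some affine
chart. -/
def IsPCDomain (Ω : Set (ℙ ℝ (Fin d → ℝ))) : Prop :=
  IsOpen Ω ∧ ∃ (f : (Fin d → ℝ) →ₗ[ℝ] ℝ) (S : Set (Fin d → ℝ)),
    Convex ℝ S ∧ Bornology.IsBounded S ∧ (∀ v ∈ S, f v = 1) ∧
    Ω = {p | ∃ v, ∃ hv : v ≠ 0, v ∈ S ∧ p = Projectivization.mk ℝ v hv}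

/-- For a fixed polynomial `p` and any linear functional `L`, the map sending a matrix `c`
to `L (aeval (linear substitution by c) p)` is continuous. -/
private lemma cont_aux (p : MvPolynomial (Fin 2) ℝ) :
    ∀ L : MvPolynomial (Fin 2) ℝ →ₗ[ℝ] ℝ,
      Continuous fun c : Matrix (Fin 2) (Fin 2) ℝ =>
        L (MvPolynomial.aeval
            (fun i => ∑ j, MvPolynomial.C (c i j) * MvPolynomial.X j) p) := by
  induction p using MvPolynomial.induction_on with
  | C a =>
      intro L
      simp only [aeval_C]
      exact continuous_const
  | add p q hp hq =>
      intro L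
      simp only [map_add]
      exact (hp L).add (hq L)
  | mul_X p i hp =>
      intro L
      have key : ∀ c : Matrix (Fin 2) (Fin 2) ℝ,
          L (MvPolynomial.aeval
              (fun i => ∑ j, MvPolynomial.C (c i j) * MvPolynomial.X j) (p * X i)) =
          ∑ j, c i j * (L.comp (LinearMap.mulRight ℝ (X j)))
            (MvPolynomial.aeval
              (fun i => ∑ j, MvPolynomial.C (c i j) * MvPolynomial.X j) p) := by
        intro c
        rw [_root_.map_mul, aeval_X, Finset.mul_sum, map_sum]
        refine Finset.sum_congr rfl fun j _ => ?_
        rw [LinearMap.comp_apply, LinearMap.mulRight_apply]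
        have : MvPolynomial.aeval
              (fun i => ∑ j, MvPolynomial.C (c i j) * MvPolynomial.X j) p *
              (MvPolynomial.C (c i j) * MvPolynomial.X j) =
            c i j • (MvPolynomial.aeval
              (fun i => ∑ j, MvPolynomial.C (c i j) * MvPolynomial.X j) p * MvPolynomial.X j) := by
          rw [smul_eq_C_mul]; ring
        rw [this, _root_.map_smul, smul_eq_mul]
      rw [show (fun c : Matrix (Fin 2) (Fin 2) ℝ =>
          L (MvPolynomial.aeval
            (fun i => ∑ j, MvPolynomial.C (c i j) * MvPolynomial.X j) (p * X i))) = _ from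
        funext key]
      exact continuous_finset_sum _ fun j _ =>
        (continuous_id.matrix_elem i j).mul (hp (L.comp (LinearMap.mulRight ℝ (X j))))

/-- Substituting `-Xᵢ` for `Xᵢ` in a homogeneous polynomial of odd degree negates it. -/
private lemma aeval_neg_of_homogeneous {n : ℕ} (hn : Odd n) {P : MvPolynomial (Fin 2) ℝ}
    (hP : P.IsHomogeneous n) :
    MvPolynomial.aeval (fun i => -MvPolynomial.X i : Fin 2 → MvPolynomial (Fin 2) ℝ) P = -P := by
  conv_lhs => rw [← P.support_sum_monomial_coeff]
  rw [map_sum]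
  conv_rhs => rw [← P.support_sum_monomial_coeff]
  rw [← Finset.sum_neg_distrib]
  refine Finset.sum_congr rfl fun s hs => ?_
  have hdeg : s.degree = n := by
    by_contra h
    exact (MvPolynomial.mem_support_iff.1 hs) (hP.coeff_eq_zero h)
  rw [aeval_monomial]
  have hprod : (s.prod fun i e => (-MvPolynomial.X i : MvPolynomial (Fin 2) ℝ) ^ e) =
      (-1 : MvPolynomial (Fin 2) ℝ) ^ n * s.prod fun i e => (MvPolynomial.X i) ^ e := by
    rw [Finsupp.prod, Finsupp.prod]
    calc (∏ i ∈ s.support, (-MvPolynomial.X i : MvPolynomial (Fin 2) ℝ) ^ s i)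
        = ∏ i ∈ s.support, ((-1 : MvPolynomial (Fin 2) ℝ) ^ s i * (MvPolynomial.X i) ^ s i) := by
          refine Finset.prod_congr rfl fun i _ => ?_
          rw [neg_pow]
      _ = (∏ i ∈ s.support, (-1 : MvPolynomial (Fin 2) ℝ) ^ s i) *
            ∏ i ∈ s.support, (MvPolynomial.X i) ^ s i := by rw [Finset.prod_mul_distrib]
      _ = (-1 : MvPolynomial (Fin 2) ℝ) ^ n * ∏ i ∈ s.support, (MvPolynomial.X i) ^ s i := by
          rw [Finset.prod_pow_eq_pow_sum]
          rw [show ∑ i ∈ s.support, s i = n from hdeg]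
  rw [hprod, hn.neg_one_pow]
  rw [MvPolynomial.monomial_eq]
  have : algebraMap ℝ (MvPolynomial (Fin 2) ℝ) (coeff s P) = MvPolynomial.C (coeff s P) := rfl
  rw [this]; ring

/-- let `d` be even and let `τ : SL(2,ℝ) → SL(d,ℝ)` be the standard
irreducible representation on homogeneous polynomials of degree `d−1` in `x₁, x₂`, acting
by `τ(g)f = f ∘ g⁻¹`.  Then no properly convex domain `Ω ⊂ P(ℝ^d)` is invariant under the
(projectivized) image of `τ`.  Here `ℝ^d` is identified with the homogeneous polynomials of
degree `d−1` by a linear isomorphism `φ`, and `T g` is the corresponding action of `g`. -/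
theorem stmt11 (d : ℕ) (hd : Even d) (hd1 : 1 ≤ d)
    (φ : (Fin d → ℝ) ≃ₗ[ℝ] MvPolynomial.homogeneousSubmodule (Fin 2) ℝ (d - 1))
    (T : Matrix.SpecialLinearGroup (Fin 2) ℝ → ((Fin d → ℝ) ≃ₗ[ℝ] (Fin d → ℝ)))
    (hT : ∀ (g : Matrix.SpecialLinearGroup (Fin 2) ℝ) (v : Fin d → ℝ),
      ((φ (T g v) : MvPolynomial (Fin 2) ℝ)) =
        MvPolynomial.aeval
          (fun i => ∑ j, MvPolynomial.C
            (((g⁻¹ : Matrix.SpecialLinearGroup (Fin 2) ℝ) : Matrix (Fin 2) (Fin 2) ℝ) i j) *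
              MvPolynomial.X j)
          ((φ v : MvPolynomial (Fin 2) ℝ))) :
    ¬ ∃ Ω : Set (ℙ ℝ (Fin d → ℝ)), IsPCDomain Ω ∧ Ω.Nonempty ∧
        ∀ g, Projectivization.map (T g).toLinearMap (T g).injective '' Ω = Ω := by
  rintro ⟨Ω, ⟨-, f, S, -, -, hf1, hΩS⟩, ⟨p, hp⟩, hinv⟩
  have hp' := hp
  rw [hΩS] at hp'
  obtain ⟨v₀, hv₀, hv₀S, rfl⟩ := hp'
  -- the rotation matrices
  have hodd : Odd (d - 1) := Nat.Even.sub_odd hd1 hd odd_one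
  set R : ℝ → Matrix.SpecialLinearGroup (Fin 2) ℝ := fun θ =>
    ⟨!![Real.cos θ, -Real.sin θ; Real.sin θ, Real.cos θ], by
      simp [Matrix.det_fin_two_of]
      nlinarith [Real.sin_sq_add_cos_sq θ]⟩ with hR
  have hRinv : ∀ θ, (((R θ)⁻¹ : Matrix.SpecialLinearGroup (Fin 2) ℝ) :
      Matrix (Fin 2) (Fin 2) ℝ) = !![Real.cos θ, Real.sin θ; -Real.sin θ, Real.cos θ] := by
    intro θ
    rw [Matrix.SpecialLinearGroup.coe_inv]
    rw [hR]
    rw [show ((⟨!![Real.cos θ, -Real.sin θ; Real.sin θ, Real.cos θ], by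
      simp [Matrix.det_fin_two_of]; nlinarith [Real.sin_sq_add_cos_sq θ]⟩ :
        Matrix.SpecialLinearGroup (Fin 2) ℝ) : Matrix (Fin 2) (Fin 2) ℝ) =
        !![Real.cos θ, -Real.sin θ; Real.sin θ, Real.cos θ] from rfl]
    rw [Matrix.adjugate_fin_two]
    norm_num
  -- the linear functional on polynomials
  set Lf : MvPolynomial (Fin 2) ℝ →ₗ[ℝ] ℝ :=
    (f.comp φ.symm.toLinearMap).comp
      ((MvPolynomial.homogeneousComponent (d - 1)).codRestrict
        (MvPolynomial.homogeneousSubmodule (Fin 2) ℝ (d - 1))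
        (fun q => (MvPolynomial.mem_homogeneousSubmodule _ _).2
          (MvPolynomial.homogeneousComponent_isHomogeneous _ _))) with hLfdef
  have hLf : ∀ w : Fin d → ℝ, Lf ((φ w : MvPolynomial (Fin 2) ℝ)) = f w := by
    intro w
    have h1 : ((MvPolynomial.homogeneousComponent (d - 1)).codRestrict
        (MvPolynomial.homogeneousSubmodule (Fin 2) ℝ (d - 1))
        (fun q => (MvPolynomial.mem_homogeneousSubmodule _ _).2
          (MvPolynomial.homogeneousComponent_isHomogeneous _ _)))
        ((φ w : MvPolynomial (Fin 2) ℝ)) = φ w := by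
      apply Subtype.ext
      simp only [LinearMap.codRestrict_apply]
      rw [MvPolynomial.homogeneousComponent_of_mem (φ w).2]
      simp
    rw [hLfdef, LinearMap.comp_apply, h1]
    simp
  set P : MvPolynomial (Fin 2) ℝ := ((φ v₀ : MvPolynomial (Fin 2) ℝ)) with hPdef
  -- the key function
  set F : ℝ → ℝ := fun θ => Lf (MvPolynomial.aeval
    (fun i => ∑ j, MvPolynomial.C
      ((!![Real.cos θ, Real.sin θ; -Real.sin θ, Real.cos θ] : Matrix (Fin 2) (Fin 2) ℝ) i j) *
        MvPolynomial.X j) P) with hFdef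
  have hF : ∀ θ, F θ = f (T (R θ) v₀) := by
    intro θ
    simp only [hFdef, hPdef]
    have := hT (R θ) v₀
    rw [hRinv θ] at this
    rw [← this, hLf]
  -- nonvanishing of F
  have key : ∀ θ, F θ ≠ 0 := by
    intro θ
    rw [hF θ]
    set g := R θ
    have hmem : Projectivization.map (T g).toLinearMap (T g).injective
        (Projectivization.mk ℝ v₀ hv₀) ∈ Ω := by
      rw [← hinv g]
      exact Set.mem_image_of_mem _ hp
    rw [Projectivization.map_mk] at hmem
    rw [hΩS] at hmem
    obtain ⟨w, hw, hwS, heq⟩ := hmem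
    rw [Projectivization.mk_eq_mk_iff] at heq
    obtain ⟨a, ha⟩ := heq
    have : f ((T g).toLinearMap v₀) = (a : ℝ) * f w := by
      rw [← ha]
      simp [Units.smul_def]
    rw [hf1 w hwS, mul_one] at this
    rw [show (T g).toLinearMap v₀ = T g v₀ from rfl] at this
    rw [this]
    exact a.ne_zero
  -- continuity of F
  have hcont : Continuous F := by
    have h1 : Continuous fun θ : ℝ =>
        (!![Real.cos θ, Real.sin θ; -Real.sin θ, Real.cos θ] : Matrix (Fin 2) (Fin 2) ℝ) := by
      apply continuous_matrix
      intro i j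
      fin_cases i <;> fin_cases j <;> simp <;> fun_prop
    exact (cont_aux P Lf).comp h1
  -- F 0 = 1
  have hF0 : F 0 = 1 := by
    simp only [hFdef, hPdef]
    have hsub : (fun i => ∑ j, MvPolynomial.C
        ((!![Real.cos 0, Real.sin 0; -Real.sin 0, Real.cos 0] : Matrix (Fin 2) (Fin 2) ℝ) i j) *
          MvPolynomial.X j) = (MvPolynomial.X : Fin 2 → MvPolynomial (Fin 2) ℝ) := by
      funext i
      fin_cases i <;> simp [Fin.sum_univ_two]
    rw [hsub, MvPolynomial.aeval_X_left_apply, hLf, hf1 v₀ hv₀S]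
  -- F π = -1
  have hFπ : F Real.pi = -1 := by
    simp only [hFdef, hPdef]
    have hsub : (fun i => ∑ j, MvPolynomial.C
        ((!![Real.cos Real.pi, Real.sin Real.pi; -Real.sin Real.pi, Real.cos Real.pi] :
          Matrix (Fin 2) (Fin 2) ℝ) i j) * MvPolynomial.X j) =
        (fun i => -MvPolynomial.X i : Fin 2 → MvPolynomial (Fin 2) ℝ) := by
      funext i
      fin_cases i <;> simp [Fin.sum_univ_two, Real.cos_pi, Real.sin_pi]
    rw [hsub, aeval_neg_of_homogeneous hodd ((MvPolynomial.mem_homogeneousSubmodule _ _).1 (φ v₀).2)]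
    rw [map_neg, hLf, hf1 v₀ hv₀S]
  -- intermediate value theorem
  have h0mem : (0 : ℝ) ∈ Set.Icc (F Real.pi) (F 0) := by
    rw [hF0, hFπ]; constructor <;> norm_num
  obtain ⟨θ, -, hθ⟩ := intermediate_value_Icc' Real.pi_pos.le hcont.continuousOn h0mem
  exact key θ hθ
end
end
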